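/- arXiv:2009.03406 — 3 statements merged into one kernel-verified Lean document; each statement's English description precedes it below -/
import Mathlib

section
/- Let n ∈ ℕ, let ε : Fin n → Bool be a function (recording for each index whether the corresponding crossing is positive), and for v ⋖ v' differing in coordinate i define m(v,v') to be the number of indices j < i such that either v_j = 1 and ε(j) = true, or v_j = 0 and ε(j) = false. Then for every square of the cube, i.e. for all v, v₁', v₂', v'' ∈ {0,1}^n with v ⋖ v₁' ⋖ v'', v ⋖ v₂' ⋖ v'', and v₁' ≠ v₂', one has m(v,v₁') + m(v₁',v'') ≢ m(v,v₂') + m(v₂',v'') (mod 2). -/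
/-- `v'` is an immediate successor of `v` in the cube `{0,1}^n`, differing in coordinate `i`:
the `i`-th coordinate changes from `0` to `1` and all other coordinates agree. -/
def IsSucc {n : ℕ} (v v' : Fin n → ZMod 2) (i : Fin n) : Prop :=
  v i = 0 ∧ v' i = 1 ∧ ∀ j : Fin n, j ≠ i → v j = v' j

/-- `m(v, v')` for the edge starting at `v` in direction `i`: the number of indices `j < i`
such that either `v j = 1` and the crossing `j` is positive (`ε j = true`), or `v j = 0` and
the crossing `j` is negative (`ε j = false`). -/
def signCount {n : ℕ} (ε : Fin n → Bool) (v : Fin n → ZMod 2) (i : Fin n) : ℕ :=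
  (Finset.univ.filter fun j : Fin n =>
    j < i ∧ ((v j = 1 ∧ ε j = true) ∨ (v j = 0 ∧ ε j = false))).card

lemma signCount_congr {n : ℕ} (ε : Fin n → Bool) (v w : Fin n → ZMod 2) (k : Fin n)
    (h : ∀ j, j < k → v j = w j) : signCount ε v k = signCount ε w k := by
  unfold signCount
  congr 1
  ext j
  simp only [Finset.mem_filter, Finset.mem_univ, true_and]
  constructor <;> rintro ⟨hj, hc⟩ <;> refine ⟨hj, ?_⟩
  · rw [← h j hj]; exact hc
  · rw [h j hj]; exact hc

lemma signCount_flip {n : ℕ} (ε : Fin n → Bool) (v w : Fin n → ZMod 2) (i k : Fin n)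
    (hvi : v i = 0) (hwi : w i = 1) (hag : ∀ j, j ≠ i → v j = w j) (hik : i < k) :
    ((signCount ε w k : ℕ) : ZMod 2) = ((signCount ε v k : ℕ) : ZMod 2) + 1 := by
  unfold signCount
  set Sv := Finset.univ.filter fun j : Fin n =>
    j < k ∧ ((v j = 1 ∧ ε j = true) ∨ (v j = 0 ∧ ε j = false)) with hSv
  set Sw := Finset.univ.filter fun j : Fin n =>
    j < k ∧ ((w j = 1 ∧ ε j = true) ∨ (w j = 0 ∧ ε j = false)) with hSw
  have hmem : ∀ j : Fin n, j ≠ i → (j ∈ Sv ↔ j ∈ Sw) := by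
    intro j hj
    simp only [hSv, hSw, Finset.mem_filter, Finset.mem_univ, true_and, hag j hj]
  by_cases hε : ε i = true
  ·
    have hiw : i ∈ Sw := by
      simp only [hSw, Finset.mem_filter, Finset.mem_univ, true_and]
      exact ⟨hik, Or.inl ⟨hwi, hε⟩⟩
    have hiv : i ∉ Sv := by
      simp only [hSv, Finset.mem_filter, Finset.mem_univ, true_and]
      rintro ⟨-, (⟨h0, -⟩ | ⟨-, h0⟩)⟩
      · rw [hvi] at h0; exact one_ne_zero h0.symm
      · rw [hε] at h0; exact Bool.noConfusion h0
    have : Sw = insert i Sv := by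
      ext j
      rcases eq_or_ne j i with rfl | hj
      · simp [hiw]
      · simp [Finset.mem_insert, hj, (hmem j hj).symm]
    rw [this, Finset.card_insert_of_notMem hiv]
    push_cast; ring
  · have hε : ε i = false := by simpa using hε
    have hiv : i ∈ Sv := by
      simp only [hSv, Finset.mem_filter, Finset.mem_univ, true_and]
      exact ⟨hik, Or.inr ⟨hvi, hε⟩⟩
    have hiw : i ∉ Sw := by
      simp only [hSw, Finset.mem_filter, Finset.mem_univ, true_and]
      rintro ⟨-, (⟨-, h0⟩ | ⟨h0, -⟩)⟩
      · rw [hε] at h0; exact Bool.noConfusion h0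
      · rw [hwi] at h0; exact one_ne_zero h0
    have : Sv = insert i Sw := by
      ext j
      rcases eq_or_ne j i with rfl | hj
      · simp [hiv]
      · simp [Finset.mem_insert, hj, hmem j hj]
    rw [this, Finset.card_insert_of_notMem hiw]
    push_cast
    linear_combination (-1 : ZMod 2) * (ZMod.natCast_self 2)

lemma key {n : ℕ} (ε : Fin n → Bool) (v v₁' v₂' v'' : Fin n → ZMod 2) (i k : Fin n)
    (hik : i < k)
    (h₁ : IsSucc v v₁' i) (h₂ : IsSucc v₁' v'' k)
    (h₃ : IsSucc v v₂' k) (h₄ : IsSucc v₂' v'' i) :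
    ((signCount ε v i + signCount ε v₁' k : ℕ) : ZMod 2) ≠
      ((signCount ε v k + signCount ε v₂' i : ℕ) : ZMod 2) := by
  obtain ⟨hv0, hv1, hag⟩ := h₁
  obtain ⟨hw0, -, hag'⟩ := h₃
  have e1 : ((signCount ε v₁' k : ℕ) : ZMod 2) = ((signCount ε v k : ℕ) : ZMod 2) + 1 :=
    signCount_flip ε v v₁' i k hv0 hv1 hag hik
  have e2 : signCount ε v₂' i = signCount ε v i := by
    apply signCount_congr
    intro j hj
    exact (hag' j (fun h => absurd (h ▸ hj) (lt_asymm hik))).symm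
  push_cast
  rw [e1, e2]
  intro h
  have : (1 : ZMod 2) = 0 := by linear_combination h
  exact one_ne_zero this

theorem stmt_0 {n : ℕ} (ε : Fin n → Bool) (v v₁' v₂' v'' : Fin n → ZMod 2)
    (i₁ j₁ i₂ j₂ : Fin n)
    (h₁ : IsSucc v v₁' i₁) (h₂ : IsSucc v₁' v'' j₁)
    (h₃ : IsSucc v v₂' i₂) (h₄ : IsSucc v₂' v'' j₂)
    (hne : v₁' ≠ v₂') :
    ((signCount ε v i₁ + signCount ε v₁' j₁ : ℕ) : ZMod 2) ≠
      ((signCount ε v i₂ + signCount ε v₂' j₂ : ℕ) : ZMod 2) := by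
  obtain ⟨a0, a1, aag⟩ := h₁
  obtain ⟨b0, b1, bag⟩ := h₂
  obtain ⟨c0, c1, cag⟩ := h₃
  obtain ⟨d0, d1, dag⟩ := h₄
  -- i₁ ≠ i₂
  have hii : i₁ ≠ i₂ := by
    rintro rfl
    apply hne
    funext j
    rcases eq_or_ne j i₁ with rfl | hj
    · rw [a1, c1]
    · rw [← aag j hj, cag j hj]
  -- i₂ = j₁
  have hi2j1 : i₂ = j₁ := by
    by_contra h
    have h1 : v₁' i₂ = v i₂ := (aag i₂ (Ne.symm hii)).symm
    have h2 : v₁' i₂ = v'' i₂ := bag i₂ h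
    rcases eq_or_ne i₂ j₂ with hj | hj
    · subst hj
      rw [h2, d1] at h1
      rw [c0] at h1
      exact one_ne_zero h1
    · have h3 : v'' i₂ = v₂' i₂ := (dag i₂ hj).symm
      rw [h2, h3, c1] at h1
      rw [c0] at h1
      exact one_ne_zero h1
  -- j₂ = i₁
  have hj2i1 : j₂ = i₁ := by
    by_contra h
    have hi1j1 : i₁ ≠ j₁ := hi2j1 ▸ hii
    have h1 : v'' i₁ = v₁' i₁ := (bag i₁ hi1j1).symm
    have h2 : v₂' i₁ = v'' i₁ := dag i₁ (Ne.symm h)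
    have h3 : v₂' i₁ = v i₁ := (cag i₁ hii).symm
    rw [h3, a0] at h2
    rw [h1, a1] at h2
    exact one_ne_zero h2.symm
  subst hi2j1
  subst hj2i1
  rcases lt_or_gt_of_ne hii with hlt | hgt
  · exact key ε v v₁' v₂' v'' _ _ hlt ⟨a0, a1, aag⟩ ⟨b0, b1, bag⟩ ⟨c0, c1, cag⟩ ⟨d0, d1, dag⟩
  · exact (key ε v v₂' v₁' v'' _ _ hgt ⟨c0, c1, cag⟩ ⟨d0, d1, dag⟩ ⟨a0, a1, aag⟩ ⟨b0, b1, bag⟩).symm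
end

section
/- Let n ∈ ℕ and let m and m' be two sign assignments on the n-cube. Then there exists a function φ : {0,1}^n → ZMod 2 such that for every pair v ⋖ v', one has m'(v,v') = m(v,v') + φ(v) + φ(v') in ZMod 2. -/
/-- A sign assignment on the `n`-cube: a `ZMod 2`-valued function on edges (recorded as a
function on all pairs of vertices, used only on immediate successor pairs) such that the sum
over the four edges of every square equals `1`. -/
def SignAssignment {n : ℕ} (m : (Fin n → ZMod 2) → (Fin n → ZMod 2) → ZMod 2) : Prop :=
  ∀ (v v₁' v₂' v'' : Fin n → ZMod 2) (i₁ j₁ i₂ j₂ : Fin n),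
    IsSucc v v₁' i₁ → IsSucc v₁' v'' j₁ → IsSucc v v₂' i₂ → IsSucc v₂' v'' j₂ →
    v₁' ≠ v₂' →
    m v v₁' + m v₁' v'' + m v v₂' + m v₂' v'' = 1

/-- Truncation: zero out all coordinates with index `≥ k`. -/
def trunc {n : ℕ} (v : Fin n → ZMod 2) (k : ℕ) : Fin n → ZMod 2 :=
  fun j => if (j : ℕ) < k then v j else 0

/-- The contribution of the `k`-th edge of the canonical path from `0` to `v`. -/
noncomputable def pterm {n : ℕ} (d : (Fin n → ZMod 2) → (Fin n → ZMod 2) → ZMod 2)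
    (v : Fin n → ZMod 2) (k : ℕ) : ZMod 2 :=
  if trunc v k = trunc v (k + 1) then 0 else d (trunc v k) (trunc v (k + 1))

lemma zmod2_cases : ∀ x : ZMod 2, x = 0 ∨ x = 1 := by decide

lemma char2_selfadd : ∀ x y : ZMod 2, y + (x + x) = y := by decide

lemma char2_sq : ∀ p q r s : ZMod 2, p + q + r + s = 0 → r + (p + s) = q := by decide

lemma char2_final : ∀ a b : ZMod 2, b = a + (a + b) := by decide

lemma char2_comb : ∀ x1 x2 x3 x4 y1 y2 y3 y4 : ZMod 2,
    x1 + x2 + x3 + x4 = 1 → y1 + y2 + y3 + y4 = 1 →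
    (x1 + y1) + (x2 + y2) + (x3 + y3) + (x4 + y4) = 0 := by decide

lemma trunc_top {n : ℕ} (v : Fin n → ZMod 2) : trunc v n = v := by
  funext j; simp [trunc, j.isLt]

lemma trunc_succ_of_zero {n : ℕ} (v : Fin n → ZMod 2) {k : ℕ} (hk : k < n)
    (hv : v ⟨k, hk⟩ = 0) : trunc v (k + 1) = trunc v k := by
  funext j
  simp only [trunc]
  rcases lt_trichotomy (j : ℕ) k with h | h | h
  · rw [if_pos h, if_pos (by omega)]
  · have : j = ⟨k, hk⟩ := Fin.ext h
    rw [if_pos (by omega), if_neg (by omega), this, hv]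
  · rw [if_neg (by omega), if_neg (by omega)]

lemma trunc_succ_isSucc {n : ℕ} (v : Fin n → ZMod 2) {k : ℕ} (hk : k < n)
    (hv : v ⟨k, hk⟩ = 1) : IsSucc (trunc v k) (trunc v (k + 1)) ⟨k, hk⟩ := by
  refine ⟨?_, ?_, ?_⟩
  · simp [trunc]
  · simpa [trunc] using hv
  · intro j hj
    have hj' : (j : ℕ) ≠ k := fun h => hj (Fin.ext h)
    simp only [trunc]
    rcases lt_trichotomy (j : ℕ) k with h | h | h
    · rw [if_pos h, if_pos (by omega)]
    · exact absurd h hj'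
    · rw [if_neg (by omega), if_neg (by omega)]

section key

variable {n : ℕ} {v v' : Fin n → ZMod 2} {i : Fin n}

lemma trunc_agree (h : IsSucc v v' i) {k : ℕ} (hk : k ≤ (i : ℕ)) :
    trunc v k = trunc v' k := by
  funext j
  simp only [trunc]
  split_ifs with hj
  · exact h.2.2 j (fun hji => by omega)
  · rfl

lemma trunc_isSucc (h : IsSucc v v' i) {k : ℕ} (hk : (i : ℕ) < k) :
    IsSucc (trunc v k) (trunc v' k) i := by
  refine ⟨?_, ?_, ?_⟩
  · simp only [trunc, if_pos hk]; exact h.1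
  · simp only [trunc, if_pos hk]; exact h.2.1
  · intro j hj
    simp only [trunc]
    split_ifs with hjk
    · exact h.2.2 j hj
    · rfl

lemma trunc_ne (h : IsSucc v v' i) {k : ℕ} (hk : (i : ℕ) < k) :
    trunc v k ≠ trunc v' k := by
  intro he
  have h1 : trunc v k i = v i := by simp only [trunc, if_pos hk]
  have h2 : trunc v' k i = v' i := by simp only [trunc, if_pos hk]
  rw [he, h2, h.2.1, h.1] at h1
  exact absurd h1 (by decide)

lemma key_sum (d : (Fin n → ZMod 2) → (Fin n → ZMod 2) → ZMod 2)
    (hd : ∀ (a b1 b2 c : Fin n → ZMod 2) (i₁ j₁ i₂ j₂ : Fin n),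
      IsSucc a b1 i₁ → IsSucc b1 c j₁ → IsSucc a b2 i₂ → IsSucc b2 c j₂ → b1 ≠ b2 →
      d a b1 + d b1 c + d a b2 + d b2 c = 0)
    (h : IsSucc v v' i) :
    ∀ k, k ≤ n → (∑ j ∈ Finset.range k, (pterm d v j + pterm d v' j)) =
      (if trunc v k = trunc v' k then 0 else d (trunc v k) (trunc v' k)) := by
  intro k
  induction k with
  | zero =>
    intro _
    have h0 : trunc v 0 = trunc v' 0 := by funext j; simp [trunc]
    simp [h0]
  | succ k ih =>
    intro hk1
    have hkn : k < n := by omega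
    rw [Finset.sum_range_succ, ih (by omega)]
    rcases lt_trichotomy k (i : ℕ) with hlt | heq | hgt
    · -- k < i : everything agrees
      have e1 : trunc v k = trunc v' k := trunc_agree h (by omega)
      have e2 : trunc v (k + 1) = trunc v' (k + 1) := trunc_agree h (by omega)
      rw [if_pos e1, if_pos e2]
      have : pterm d v k = pterm d v' k := by
        simp only [pterm, e1, e2]
      rw [this]
      exact char2_selfadd _ _
    · -- k = i
      have hiF : (⟨k, hkn⟩ : Fin n) = i := Fin.ext heq
      have hv0 : v ⟨k, hkn⟩ = 0 := by rw [hiF]; exact h.1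
      have e1 : trunc v k = trunc v' k := trunc_agree h (by omega)
      have e2 : trunc v (k + 1) = trunc v k := trunc_succ_of_zero v hkn hv0
      have hne : trunc v (k + 1) ≠ trunc v' (k + 1) := trunc_ne h (by omega)
      have e3 : trunc v' k = trunc v (k + 1) := by rw [e2, e1]
      have hne' : trunc v' k ≠ trunc v' (k + 1) := by rw [e3]; exact hne
      rw [if_pos e1, if_neg hne]
      have t1 : pterm d v k = 0 := by simp only [pterm, if_pos e2.symm]
      have t2 : pterm d v' k = d (trunc v (k + 1)) (trunc v' (k + 1)) := by
        simp only [pterm, if_neg hne']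
        rw [e3]
      rw [t1, t2, zero_add, zero_add]
    · -- i < k
      have hkiF : (⟨k, hkn⟩ : Fin n) ≠ i := fun he => by
        have : k = (i : ℕ) := congrArg Fin.val he
        omega
      have hvv' : v ⟨k, hkn⟩ = v' ⟨k, hkn⟩ := h.2.2 _ hkiF
      rcases zmod2_cases (v ⟨k, hkn⟩) with hv0 | hv1
      · -- degenerate edges
        have hv'0 : v' ⟨k, hkn⟩ = 0 := by rw [← hvv']; exact hv0
        have e1 : trunc v (k + 1) = trunc v k := trunc_succ_of_zero v hkn hv0
        have e2 : trunc v' (k + 1) = trunc v' k := trunc_succ_of_zero v' hkn hv'0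
        simp only [pterm, if_pos e1.symm, if_pos e2.symm, e1, e2]
        exact char2_selfadd _ _
      · -- square argument
        have hv'1 : v' ⟨k, hkn⟩ = 1 := by rw [← hvv']; exact hv1
        have s1 : IsSucc (trunc v k) (trunc v (k + 1)) ⟨k, hkn⟩ :=
          trunc_succ_isSucc v hkn hv1
        have s4 : IsSucc (trunc v' k) (trunc v' (k + 1)) ⟨k, hkn⟩ :=
          trunc_succ_isSucc v' hkn hv'1
        have s3 : IsSucc (trunc v k) (trunc v' k) i := trunc_isSucc h hgt
        have s2 : IsSucc (trunc v (k + 1)) (trunc v' (k + 1)) i :=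
          trunc_isSucc h (by omega)
        have hb : trunc v (k + 1) ≠ trunc v' k := by
          intro he
          have h1 : trunc v (k + 1) i = v i := by
            simp only [trunc, if_pos (show (i : ℕ) < k + 1 by omega)]
          have h2 : trunc v' k i = v' i := by
            simp only [trunc, if_pos hgt]
          rw [he, h2, h.2.1] at h1
          rw [h.1] at h1
          exact absurd h1 (by decide)
        have H := hd (trunc v k) (trunc v (k + 1)) (trunc v' k) (trunc v' (k + 1))
          ⟨k, hkn⟩ i i ⟨k, hkn⟩ s1 s2 s3 s4 hb
        have n1 : trunc v k ≠ trunc v (k + 1) := by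
          intro he
          have := s1.1
          rw [he, s1.2.1] at this
          exact absurd this (by decide)
        have n2 : trunc v' k ≠ trunc v' (k + 1) := by
          intro he
          have := s4.1
          rw [he, s4.2.1] at this
          exact absurd this (by decide)
        rw [if_neg (trunc_ne h hgt), if_neg (trunc_ne h (show (i:ℕ) < k + 1 by omega))]
        simp only [pterm, if_neg n1, if_neg n2]
        exact char2_sq _ _ _ _ H

end key

theorem stmt_2 {n : ℕ} (m m' : (Fin n → ZMod 2) → (Fin n → ZMod 2) → ZMod 2)
    (hm : SignAssignment m) (hm' : SignAssignment m') :
    ∃ φ : (Fin n → ZMod 2) → ZMod 2,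
      ∀ (v v' : Fin n → ZMod 2) (i : Fin n), IsSucc v v' i →
        m' v v' = m v v' + φ v + φ v' := by
  set d : (Fin n → ZMod 2) → (Fin n → ZMod 2) → ZMod 2 :=
    fun x y => m x y + m' x y with hd_def
  have hd : ∀ (a b1 b2 c : Fin n → ZMod 2) (i₁ j₁ i₂ j₂ : Fin n),
      IsSucc a b1 i₁ → IsSucc b1 c j₁ → IsSucc a b2 i₂ → IsSucc b2 c j₂ → b1 ≠ b2 →
      d a b1 + d b1 c + d a b2 + d b2 c = 0 := by
    intro a b1 b2 c i₁ j₁ i₂ j₂ h1 h2 h3 h4 hne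
    exact char2_comb _ _ _ _ _ _ _ _
      (hm a b1 b2 c i₁ j₁ i₂ j₂ h1 h2 h3 h4 hne)
      (hm' a b1 b2 c i₁ j₁ i₂ j₂ h1 h2 h3 h4 hne)
  refine ⟨fun v => ∑ j ∈ Finset.range n, pterm d v j, ?_⟩
  intro v v' i h
  have hsum := key_sum d hd h n le_rfl
  rw [Finset.sum_add_distrib] at hsum
  have htop : trunc v n ≠ trunc v' n := trunc_ne h i.isLt
  rw [if_neg htop, trunc_top, trunc_top] at hsum
  rw [add_assoc, hsum]
  exact char2_final (m v v') (m' v v')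
end

section
/- Let Ω and Ω' be cochain complexes of R-modules, both simple, and let f, g : Ω → Ω' be homotopy equivalences. Then f and g are chain homotopic up to multiplication by a unit: there exists a unit u ∈ Rˣ such that f is chain homotopic to u • g. -/
open CategoryTheory

variable {R : Type} [CommRing R]

/-- A cochain complex `Ω` of `R`-modules is *simple* if every chain map `e : Ω ⟶ Ω` is chain
homotopic to a unique scalar multiple of the identity. -/
def IsSimpleComplex (Ω : CochainComplex (ModuleCat R) ℤ) : Prop :=
  ∀ e : Ω ⟶ Ω, ∃! r : R, Nonempty (Homotopy e (r • 𝟙 Ω))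

theorem stmt_12 (Ω Ω' : CochainComplex (ModuleCat R) ℤ)
    (hΩ : IsSimpleComplex Ω) (hΩ' : IsSimpleComplex Ω')
    (f g : HomotopyEquiv Ω Ω') :
    ∃ u : Rˣ, Nonempty (Homotopy f.hom ((u : R) • g.hom)) := by
  obtain ⟨r, ⟨hr⟩, -⟩ := hΩ (f.hom ≫ g.inv)
  obtain ⟨t, ⟨ht⟩, -⟩ := hΩ (g.hom ≫ f.inv)
  have h1 : Homotopy ((f.hom ≫ g.inv) ≫ (g.hom ≫ f.inv)) ((r * t) • 𝟙 Ω) :=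
    (hr.comp ht).trans (Homotopy.ofEq (by
      simp [Linear.smul_comp, Linear.comp_smul, smul_smul, mul_comm r t]))
  have h2 : Homotopy ((f.hom ≫ g.inv) ≫ (g.hom ≫ f.inv)) ((1 : R) • 𝟙 Ω) := by
    refine Homotopy.trans ?_ (Homotopy.ofEq (one_smul R (𝟙 Ω)).symm)
    refine Homotopy.trans ?_ f.homotopyHomInvId
    refine Homotopy.trans (Homotopy.ofEq (show (f.hom ≫ g.inv) ≫ (g.hom ≫ f.inv)
      = (f.hom ≫ (g.inv ≫ g.hom)) ≫ f.inv by simp)) ?_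
    refine Homotopy.trans ((g.homotopyInvHomId.compLeft f.hom).compRight f.inv) ?_
    exact Homotopy.ofEq (by simp)
  have key : r * t = 1 := by
    obtain ⟨c, -, hcu⟩ := hΩ ((f.hom ≫ g.inv) ≫ (g.hom ≫ f.inv))
    rw [hcu (r * t) ⟨h1⟩, hcu 1 ⟨h2⟩]
  refine ⟨⟨r, t, key, by rwa [mul_comm]⟩, ⟨?_⟩⟩
  refine (Homotopy.ofEq (Category.comp_id _).symm).trans ?_
  refine ((g.homotopyInvHomId.compLeft f.hom).symm.trans ?_)
  refine (Homotopy.ofEq (Category.assoc _ _ _).symm).trans ?_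
  exact (hr.compRight g.hom).trans (Homotopy.ofEq (by simp [Linear.smul_comp]))
end
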